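/- Angle of parallelism: in the hyperbolic plane, for a point G at distance p > 0 from a line ℓ (with F the foot of the perpendicular from G to ℓ), the supremum of the angles ∠FGA over all points A on ℓ distinct from F is the angle Π(p) satisfying cos Π(p) = tanh p (equivalently tan(Π(p)/2) = e^{−p}); in particular Π(p) < π/2, and Π(p) → π/2 as p → 0 while Π(p) → 0 as p → ∞. -/

import Mathlib

open Real Filter Topology

/-- The inverse hyperbolic cosine on `[1, ∞)`. -/
noncomputable def arcosh (x : ℝ) : ℝ := Real.log (x + Real.sqrt (x ^ 2 - 1))

/-- The hypotenuse of a hyperbolic right triangle with legs `p` and `q`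
(hyperbolic Pythagorean theorem). -/
noncomputable def hypotenuse (p q : ℝ) : ℝ := _root_.arcosh (Real.cosh p * Real.cosh q)

/-- The angle at the vertex of the leg of length `p` in a hyperbolic right triangle with legs
`p, q`, computed from the hyperbolic law of cosines (the side opposite this angle is the leg of
length `q`). -/
noncomputable def rightTriangleAngle (p q : ℝ) : ℝ :=
  Real.arccos ((Real.cosh p * Real.cosh (hypotenuse p q) - Real.cosh q) /
    (Real.sinh p * Real.sinh (hypotenuse p q)))

lemma cosh_arcosh {x : ℝ} (hx : 1 ≤ x) : Real.cosh (_root_.arcosh x) = x := by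
  have hs : Real.sqrt (x ^ 2 - 1) ^ 2 = x ^ 2 - 1 := by
    rw [Real.sq_sqrt]; nlinarith
  set s := Real.sqrt (x ^ 2 - 1) with hsdef
  have hs0 : 0 ≤ s := Real.sqrt_nonneg _
  have hy : 0 < x + s := by nlinarith
  rw [_root_.arcosh, Real.cosh_eq, Real.exp_log hy, Real.exp_neg, Real.exp_log hy]
  rw [inv_eq_one_div]
  field_simp
  nlinarith

lemma sinh_arcosh {x : ℝ} (hx : 1 ≤ x) : Real.sinh (_root_.arcosh x) = Real.sqrt (x ^ 2 - 1) := by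
  have hs : Real.sqrt (x ^ 2 - 1) ^ 2 = x ^ 2 - 1 := by
    rw [Real.sq_sqrt]; nlinarith
  set s := Real.sqrt (x ^ 2 - 1) with hsdef
  have hs0 : 0 ≤ s := Real.sqrt_nonneg _
  have hy : 0 < x + s := by nlinarith
  rw [_root_.arcosh, Real.sinh_eq, Real.exp_log hy, Real.exp_neg, Real.exp_log hy]
  rw [inv_eq_one_div]
  field_simp
  nlinarith

lemma angle_eq (p q : ℝ) (hp : 0 < p) :
    rightTriangleAngle p q =
      Real.arccos (Real.sinh p * Real.cosh q /
        Real.sqrt ((Real.cosh p * Real.cosh q) ^ 2 - 1)) := by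
  have hcp : 1 < Real.cosh p := Real.one_lt_cosh.2 hp.ne'
  have hx : 1 < Real.cosh p * Real.cosh q := by
    nlinarith [Real.one_le_cosh q]
  have hsp : 0 < Real.sinh p := Real.sinh_pos_iff.2 hp
  have h1 : Real.cosh (hypotenuse p q) = Real.cosh p * Real.cosh q := _root_.cosh_arcosh hx.le
  have h2 : Real.sinh (hypotenuse p q) = Real.sqrt ((Real.cosh p * Real.cosh q) ^ 2 - 1) :=
    _root_.sinh_arcosh hx.le
  have hsq : 0 < Real.sqrt ((Real.cosh p * Real.cosh q) ^ 2 - 1) := by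
    apply Real.sqrt_pos.2; nlinarith
  rw [rightTriangleAngle, h1, h2]
  congr 1
  have hnum : Real.cosh p * (Real.cosh p * Real.cosh q) - Real.cosh q
      = Real.sinh p ^ 2 * Real.cosh q := by
    have := Real.cosh_sq p
    nlinarith [Real.cosh_pos q]
  rw [hnum, mul_comm (Real.sinh p), div_eq_div_iff (by positivity) (by positivity)]
  ring

lemma arccos_anti {x y : ℝ} (h : x ≤ y) : Real.arccos y ≤ Real.arccos x := by
  rw [Real.arccos, Real.arccos]
  linarith [Real.monotone_arcsin h]

lemma cosh_tendsto : Tendsto Real.cosh atTop atTop := by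
  apply tendsto_atTop_mono (f := fun q => Real.exp q / 2)
  · intro q
    rw [Real.cosh_eq]
    have := Real.exp_pos (-q)
    linarith
  · exact Real.tendsto_exp_atTop.atTop_div_const (by norm_num)

lemma tanh_tendsto : Tendsto Real.tanh atTop (𝓝 1) := by
  have hid : ∀ p : ℝ, Real.tanh p = (1 - Real.exp (-p) * Real.exp (-p)) /
      (1 + Real.exp (-p) * Real.exp (-p)) := by
    intro p
    rw [Real.tanh_eq_sinh_div_cosh, Real.sinh_eq, Real.cosh_eq]
    have h1 : Real.exp p ≠ 0 := (Real.exp_pos p).ne'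
    have h2 : Real.exp (-p) * Real.exp p = 1 := by
      rw [← Real.exp_add]; simp
    have h3 : 0 < 1 + Real.exp (-p) * Real.exp (-p) := by positivity
    field_simp
    linear_combination (2 * Real.exp (-p)) * h2
  have he : Tendsto (fun p : ℝ => Real.exp (-p)) atTop (𝓝 0) :=
    Real.tendsto_exp_neg_atTop_nhds_zero
  have hmain := ((tendsto_const_nhds (x := (1:ℝ)).sub (he.mul he)).div
    (tendsto_const_nhds (x := (1:ℝ)).add (he.mul he)) (by norm_num))
  have := hmain.congr (fun p => (hid p).symm)
  simpa using this

lemma tanh_pos' {p : ℝ} (hp : 0 < p) : 0 < Real.tanh p := by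
  rw [Real.tanh_eq_sinh_div_cosh]
  exact div_pos (Real.sinh_pos_iff.2 hp) (Real.cosh_pos p)

lemma angle_tendsto (p : ℝ) (hp : 0 < p) :
    Tendsto (fun q => rightTriangleAngle p q) atTop (𝓝 (Real.arccos (Real.tanh p))) := by
  have hcp : 0 < Real.cosh p := Real.cosh_pos p
  have hsp : 0 < Real.sinh p := Real.sinh_pos_iff.2 hp
  -- rewrite the angle as arccos (tanh p / sqrt (1 - x⁻¹ ^ 2)) with x = cosh p * cosh q
  have key : ∀ q : ℝ, rightTriangleAngle p q =
      Real.arccos (Real.tanh p / Real.sqrt (1 - ((Real.cosh p * Real.cosh q)⁻¹) ^ 2)) := by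
    intro q
    rw [angle_eq p q hp]
    congr 1
    have hcq : 0 < Real.cosh q := Real.cosh_pos q
    have hx : 1 < Real.cosh p * Real.cosh q := by
      nlinarith [Real.one_lt_cosh.2 hp.ne', Real.one_le_cosh q]
    set x := Real.cosh p * Real.cosh q with hxdef
    have hx0 : 0 < x := by positivity
    have hsqx : Real.sqrt (x ^ 2 - 1) = x * Real.sqrt (1 - x⁻¹ ^ 2) := by
      rw [← Real.sqrt_sq hx0.le, ← Real.sqrt_mul (by positivity)]
      congr 1
      field_simp
      rw [Real.sq_sqrt (by positivity)]
    have hS : (0:ℝ) < Real.sqrt (1 - x⁻¹ ^ 2) := by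
      apply Real.sqrt_pos.2
      have : x⁻¹ < 1 := inv_lt_one_of_one_lt₀ hx
      have h0 : 0 < x⁻¹ := by positivity
      nlinarith
    rw [hsqx, Real.tanh_eq_sinh_div_cosh, hxdef]
    rw [div_div, mul_comm (Real.cosh p) (Real.cosh q), mul_assoc,
      mul_comm (Real.sinh p) (Real.cosh q), mul_div_mul_left _ _ hcq.ne']
  simp_rw [key]
  have hxt : Tendsto (fun q => Real.cosh p * Real.cosh q) atTop atTop :=
    cosh_tendsto.const_mul_atTop hcp
  have hinv : Tendsto (fun q => ((Real.cosh p * Real.cosh q)⁻¹) ^ 2) atTop (𝓝 0) := by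
    have := (tendsto_inv_atTop_zero.comp hxt)
    simpa using this.mul this |>.congr (fun q => (sq _).symm)
  have hsqrt : Tendsto (fun q => Real.sqrt (1 - ((Real.cosh p * Real.cosh q)⁻¹) ^ 2))
      atTop (𝓝 1) := by
    have h1 : Tendsto (fun q => 1 - ((Real.cosh p * Real.cosh q)⁻¹) ^ 2) atTop (𝓝 1) := by
      simpa using tendsto_const_nhds.sub hinv
    have := (Real.continuous_sqrt.continuousAt (x := (1:ℝ))).tendsto.comp h1
    simpa [Function.comp_def] using this
  have hA : Tendsto (fun q => Real.tanh p / Real.sqrt (1 - ((Real.cosh p * Real.cosh q)⁻¹) ^ 2))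
      atTop (𝓝 (Real.tanh p)) := by
    have := (tendsto_const_nhds (x := Real.tanh p)).div hsqrt (by norm_num)
    simpa [Pi.div_def] using this
  exact (Real.continuous_arccos.continuousAt.tendsto.comp hA :)

lemma angle_le (p q : ℝ) (hp : 0 < p) (hq : 0 < q) :
    rightTriangleAngle p q ≤ Real.arccos (Real.tanh p) := by
  rw [angle_eq p q hp]
  apply arccos_anti
  have hcq : 0 < Real.cosh q := Real.cosh_pos q
  have hcp : 0 < Real.cosh p := Real.cosh_pos p
  have hsp : 0 < Real.sinh p := Real.sinh_pos_iff.2 hp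
  have hx : 1 < Real.cosh p * Real.cosh q := by
    nlinarith [Real.one_lt_cosh.2 hp.ne', Real.one_le_cosh q]
  set x := Real.cosh p * Real.cosh q with hxdef
  have hsq : 0 < Real.sqrt (x ^ 2 - 1) := Real.sqrt_pos.2 (by nlinarith)
  have hle : Real.sqrt (x ^ 2 - 1) ≤ x := by
    have h := Real.sqrt_le_sqrt (show x ^ 2 - 1 ≤ x ^ 2 by nlinarith)
    rwa [Real.sqrt_sq (by positivity)] at h
  have h1 : Real.tanh p = Real.sinh p * Real.cosh q / x := by
    rw [Real.tanh_eq_sinh_div_cosh, hxdef]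
    field_simp
  rw [h1]
  exact div_le_div_of_nonneg_left (by positivity) hsq hle

/-- Angle of parallelism: for a point at distance `p > 0` from a line, the supremum of the
angles `∠FGA` (over points `A ≠ F` on the line, i.e. over the leg length `q > 0` of the right
triangle `GFA`) equals `Π(p) = arccos (tanh p)`; in particular `Π(p) < π/2`, and
`Π(p) → π/2` as `p → 0⁺` while `Π(p) → 0` as `p → ∞`. -/
theorem angle_of_parallelism :
    (∀ p : ℝ, 0 < p →
      sSup ((fun q => rightTriangleAngle p q) '' Set.Ioi 0) = Real.arccos (Real.tanh p) ∧
      Real.arccos (Real.tanh p) < π / 2) ∧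
    Tendsto (fun p => Real.arccos (Real.tanh p)) (𝓝[>] 0) (𝓝 (π / 2)) ∧
    Tendsto (fun p => Real.arccos (Real.tanh p)) atTop (𝓝 0) := by
  refine ⟨fun p hp => ⟨?_, Real.arccos_lt_pi_div_two.2 (tanh_pos' hp)⟩, ?_, ?_⟩
  · apply IsLUB.csSup_eq
    · constructor
      · rintro a ⟨q, hq, rfl⟩
        exact angle_le p q hp hq
      · intro b hb
        refine le_of_tendsto (angle_tendsto p hp) ?_
        filter_upwards [eventually_gt_atTop 0] with q hq
        exact hb ⟨q, hq, rfl⟩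
    · exact ⟨_, ⟨1, Set.mem_Ioi.2 one_pos, rfl⟩⟩
  · have htanh : Continuous Real.tanh :=
      (Real.continuous_sinh.div Real.continuous_cosh
        (fun x => (Real.cosh_pos x).ne')).congr
          (fun x => (Real.tanh_eq_sinh_div_cosh x).symm)
    have hc : ContinuousAt (fun p : ℝ => Real.arccos (Real.tanh p)) 0 :=
      (Real.continuous_arccos.comp htanh).continuousAt
    have h2 : Tendsto (fun p : ℝ => Real.arccos (Real.tanh p)) (𝓝[>] (0:ℝ))
        (𝓝 (Real.arccos (Real.tanh 0))) := hc.continuousWithinAt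
    simpa [Real.tanh_zero, Real.arccos_zero] using h2
  · have := Real.continuous_arccos.continuousAt.tendsto.comp tanh_tendsto
    simpa [Real.arccos_one, Function.comp_def] using this
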